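/- Let r ≥ 1, j ≥ 1, s ∈ [j]₀, and let X be a (d₀, 1/d)-spread j-uniform hypergraph with vertex set contained in a set E, with d ≥ 1 and, if s = 0, d₀ ≥ d^j. Define X_{j−s} := {(X, M) : X ∈ E(X), M ⊆ X, |M| = j−s}. Then ∑_{(X₁,M₁),…,(X_r,M_r) ∈ X_{j−s}} d^{−|M₁ ∪ ⋯ ∪ M_r|} ≤ (4ℓ r)^{2ℓ r} · d₀^r / d^{r(j−s)}, for any ℓ ≥ j, where the base case r = 1 gives ∑_{(X₁,M₁)} d^{−|M₁|} ≤ 4^ℓ · d₀/d^{j−s} and the inductive step multiplies by at most (4ℓr)^{2ℓ}·d₀/d^{j−s}. -/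

import Mathlib

/-- A j-uniform hypergraph `X` (a collection of j-sets) is (d₀, δ)-spread if
every set of j' vertices, 0 ≤ j' ≤ j-1, is contained in at most δ^j'·d₀ edges. -/
def IsSpread {α : Type*} [DecidableEq α] (j : ℕ) (d₀ δ : ℝ)
    (X : Finset (Finset α)) : Prop :=
  ∀ j' : ℕ, j' ≤ j - 1 → ∀ E : Finset α, E.card = j' →
    ((X.filter (fun x => E ⊆ x)).card : ℝ) ≤ δ ^ j' * d₀

open Finset

lemma aux_count {α : Type*} [DecidableEq α] [Fintype α] (j t : ℕ)
    (X' : Finset (Finset α)) (hX' : ∀ x ∈ X', x.card = j) :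
    ((X' ×ˢ (Finset.univ : Finset (Finset α))).filter
      (fun p => p.2 ⊆ p.1 ∧ p.2.card = t)).card ≤ X'.card * Nat.choose j t := by
  classical
  set S := (X' ×ˢ (Finset.univ : Finset (Finset α))).filter
      (fun p => p.2 ⊆ p.1 ∧ p.2.card = t) with hS
  have hmaps : ∀ p ∈ S, p.1 ∈ X' := by
    intro p hp
    simp only [hS, mem_filter, mem_product] at hp
    exact hp.1.1
  rw [Finset.card_eq_sum_card_fiberwise hmaps]
  have : ∀ x ∈ X', (S.filter (fun p => p.1 = x)).card ≤ Nat.choose j t := by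
    intro x hx
    have : (S.filter (fun p => p.1 = x)).card ≤ (x.powersetCard t).card := by
      apply Finset.card_le_card_of_injOn (fun p => p.2)
      · intro p hp
        simp only [Finset.mem_coe, hS, mem_filter, mem_product] at hp
        rw [Finset.mem_coe, Finset.mem_powersetCard]
        refine ⟨fun a ha => hp.2 ▸ hp.1.2.1 ha, hp.1.2.2⟩
      · intro p hp q hq h
        simp only [Finset.coe_filter, Set.mem_setOf_eq, hS] at hp hq
        exact Prod.ext (hp.2.trans hq.2.symm) h
    simpa [Finset.card_powersetCard, hX' x hx] using this
  calc ∑ x ∈ X', (S.filter (fun p => p.1 = x)).card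
      ≤ ∑ _x ∈ X', Nat.choose j t := Finset.sum_le_sum this
    _ = X'.card * Nat.choose j t := by rw [Finset.sum_const, smul_eq_mul]


lemma aux_core {α : Type*} [DecidableEq α] [Fintype α]
    (r j s ℓ : ℕ) (hr : 1 ≤ r) (hj : 1 ≤ j) (hs : s ≤ j) (hℓ : j ≤ ℓ)
    (d₀ d : ℝ) (hd₀ : 0 ≤ d₀) (hd : 1 ≤ d)
    (X : Finset (Finset α)) (hunif : ∀ x ∈ X, x.card = j)
    (hspread : IsSpread j d₀ (1 / d) X)
    (hs0 : s = 0 → d ^ j ≤ d₀)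
    (M : Finset α) (hM : M.card ≤ ℓ * r) :
    ∑ p ∈ (X ×ˢ (Finset.univ : Finset (Finset α))).filter
          (fun p => p.2 ⊆ p.1 ∧ p.2.card = j - s),
      (d : ℝ) ^ (p.2 ∩ M).card
    ≤ ((4 * ℓ * r) ^ (2 * ℓ) : ℕ) * d₀ := by
  classical
  have hd0 : (0:ℝ) < d := lt_of_lt_of_le one_pos hd
  set P := (X ×ˢ (Finset.univ : Finset (Finset α))).filter
          (fun p => p.2 ⊆ p.1 ∧ p.2.card = j - s) with hP
  -- fiberwise decomposition over N = p.2 ∩ M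
  have hmaps : ∀ p ∈ P, p.2 ∩ M ∈ M.powerset := fun p _ =>
    Finset.mem_powerset.2 inter_subset_right
  have h1 : ∑ p ∈ P, (d : ℝ) ^ (p.2 ∩ M).card
      = ∑ N ∈ M.powerset, ∑ p ∈ P.filter (fun p => p.2 ∩ M = N),
          (d : ℝ) ^ (p.2 ∩ M).card :=
    (Finset.sum_fiberwise_of_maps_to hmaps _).symm
  rw [h1]
  -- restrict to small N
  have h2 : ∑ N ∈ M.powerset, ∑ p ∈ P.filter (fun p => p.2 ∩ M = N),
          (d : ℝ) ^ (p.2 ∩ M).card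
      = ∑ N ∈ M.powerset.filter (fun N => N.card ≤ j - s),
          ∑ p ∈ P.filter (fun p => p.2 ∩ M = N), (d : ℝ) ^ (p.2 ∩ M).card := by
    refine (Finset.sum_subset (Finset.filter_subset _ _) ?_).symm
    intro N hN hN'
    have : P.filter (fun p => p.2 ∩ M = N) = ∅ := by
      rw [Finset.filter_eq_empty_iff]
      intro p hp hcon
      simp only [hP, mem_filter] at hp
      apply hN'
      rw [Finset.mem_filter]
      refine ⟨hN, ?_⟩
      rw [← hcon, ← hp.2.2]
      exact Finset.card_le_card inter_subset_left
    rw [this, Finset.sum_empty]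
  rw [h2]
  -- bound each fiber
  have key : ∀ N ∈ M.powerset.filter (fun N => N.card ≤ j - s),
      ∑ p ∈ P.filter (fun p => p.2 ∩ M = N), (d : ℝ) ^ (p.2 ∩ M).card
      ≤ (Nat.choose j (j - s) : ℝ) * d₀ := by
    intro N hN
    rw [Finset.mem_filter, Finset.mem_powerset] at hN
    have hsum : ∑ p ∈ P.filter (fun p => p.2 ∩ M = N), (d : ℝ) ^ (p.2 ∩ M).card
        = (P.filter (fun p => p.2 ∩ M = N)).card * (d:ℝ) ^ N.card := by
      calc ∑ p ∈ P.filter (fun p => p.2 ∩ M = N), (d : ℝ) ^ (p.2 ∩ M).card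
          = ∑ _p ∈ P.filter (fun p => p.2 ∩ M = N), (d : ℝ) ^ N.card :=
            Finset.sum_congr rfl (fun p hp => by rw [(Finset.mem_filter.1 hp).2])
        _ = (P.filter (fun p => p.2 ∩ M = N)).card * (d:ℝ) ^ N.card := by
            rw [Finset.sum_const, nsmul_eq_mul]
    rw [hsum]
    -- count the fiber
    have hsub : P.filter (fun p => p.2 ∩ M = N) ⊆
        ((X.filter (fun x => N ⊆ x)) ×ˢ (Finset.univ : Finset (Finset α))).filter
          (fun p => p.2 ⊆ p.1 ∧ p.2.card = j - s) := by
      intro p hp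
      rw [Finset.mem_filter] at hp
      obtain ⟨hpP, hpN⟩ := hp
      rw [hP, Finset.mem_filter, Finset.mem_product] at hpP
      rw [Finset.mem_filter, Finset.mem_product]
      refine ⟨⟨Finset.mem_filter.2 ⟨hpP.1.1, ?_⟩, Finset.mem_univ _⟩, hpP.2⟩
      intro a ha
      rw [← hpN] at ha
      exact hpP.2.1 (Finset.mem_inter.1 ha).1
    have hcount : (P.filter (fun p => p.2 ∩ M = N)).card ≤
        (X.filter (fun x => N ⊆ x)).card * Nat.choose j (j - s) :=
      le_trans (Finset.card_le_card hsub)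
        (aux_count j (j - s) _ (fun x hx => hunif x (Finset.mem_filter.1 hx).1))
    -- Δ_N * d^|N| ≤ d₀
    have hΔ : ((X.filter (fun x => N ⊆ x)).card : ℝ) * d ^ N.card ≤ d₀ := by
      by_cases hN1 : N.card ≤ j - 1
      · have := hspread N.card hN1 N rfl
        have hpow : ((1:ℝ)/d) ^ N.card * d ^ N.card = 1 := by
          rw [div_pow, one_pow, div_mul_cancel₀]
          exact pow_ne_zero _ (ne_of_gt hd0)
        calc ((X.filter (fun x => N ⊆ x)).card : ℝ) * d ^ N.card
            ≤ ((1/d) ^ N.card * d₀) * d ^ N.card := by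
              apply mul_le_mul_of_nonneg_right this (le_of_lt (pow_pos hd0 _))
          _ = d₀ := by rw [mul_comm _ d₀, mul_assoc, hpow, mul_one]
      · have hNj : N.card = j := by omega
        have hs' : s = 0 := by omega
        have hle : (X.filter (fun x => N ⊆ x)).card ≤ 1 := by
          have : X.filter (fun x => N ⊆ x) ⊆ {N} := by
            intro x hx
            rw [Finset.mem_filter] at hx
            have := Finset.eq_of_subset_of_card_le hx.2
              (by rw [hunif x hx.1, hNj])
            simp [this]
          simpa using Finset.card_le_card this
        calc ((X.filter (fun x => N ⊆ x)).card : ℝ) * d ^ N.card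
            ≤ 1 * d ^ N.card := by
              apply mul_le_mul_of_nonneg_right _ (le_of_lt (pow_pos hd0 _))
              exact_mod_cast hle
          _ = d ^ j := by rw [one_mul, hNj]
          _ ≤ d₀ := hs0 hs'
    calc ((P.filter (fun p => p.2 ∩ M = N)).card : ℝ) * (d:ℝ) ^ N.card
        ≤ ((X.filter (fun x => N ⊆ x)).card * Nat.choose j (j - s) : ℕ) * d ^ N.card := by
          apply mul_le_mul_of_nonneg_right _ (le_of_lt (pow_pos hd0 _))
          exact_mod_cast hcount
      _ = (Nat.choose j (j - s) : ℝ) * (((X.filter (fun x => N ⊆ x)).card : ℝ) * d ^ N.card) := by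
          push_cast; ring
      _ ≤ (Nat.choose j (j - s) : ℝ) * d₀ := by
          apply mul_le_mul_of_nonneg_left hΔ (by positivity)
  -- combine
  have hcard : (M.powerset.filter (fun N => N.card ≤ j - s)).card * Nat.choose j (j - s)
      ≤ (4 * ℓ * r) ^ (2 * ℓ) := by
      have hℓr : 1 ≤ ℓ * r := Nat.mul_pos (by omega) hr
      have h1 : (M.powerset.filter (fun N => N.card ≤ j - s)).card ≤ (ℓ + 1) * (ℓ * r) ^ ℓ := by
        have hsub : M.powerset.filter (fun N => N.card ≤ j - s) ⊆
            (Finset.range (j - s + 1)).biUnion (fun k => M.powersetCard k) := by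
          intro N hN
          rw [Finset.mem_filter, Finset.mem_powerset] at hN
          rw [Finset.mem_biUnion]
          exact ⟨N.card, Finset.mem_range.2 (by omega), Finset.mem_powersetCard.2 ⟨hN.1, rfl⟩⟩
        calc (M.powerset.filter (fun N => N.card ≤ j - s)).card
            ≤ ((Finset.range (j - s + 1)).biUnion (fun k => M.powersetCard k)).card :=
              Finset.card_le_card hsub
          _ ≤ ∑ k ∈ Finset.range (j - s + 1), (M.powersetCard k).card :=
              Finset.card_biUnion_le
          _ ≤ ∑ _k ∈ Finset.range (j - s + 1), (ℓ * r) ^ ℓ := by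
              apply Finset.sum_le_sum
              intro k hk
              rw [Finset.mem_range] at hk
              rw [Finset.card_powersetCard]
              calc M.card.choose k ≤ (ℓ * r).choose k := Nat.choose_le_choose k hM
                _ ≤ (ℓ * r) ^ k := Nat.choose_le_pow _ _
                _ ≤ (ℓ * r) ^ ℓ := Nat.pow_le_pow_right hℓr (by omega)
          _ = (j - s + 1) * (ℓ * r) ^ ℓ := by rw [Finset.sum_const, smul_eq_mul, Finset.card_range]
          _ ≤ (ℓ + 1) * (ℓ * r) ^ ℓ := Nat.mul_le_mul_right _ (by omega)
      have h2 : Nat.choose j (j - s) ≤ 2 ^ ℓ := by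
        calc Nat.choose j (j - s) ≤ ∑ i ∈ Finset.range (j + 1), Nat.choose j i :=
            Finset.single_le_sum (fun i _ => Nat.zero_le _) (Finset.mem_range.2 (by omega))
          _ = 2 ^ j := Nat.sum_range_choose j
          _ ≤ 2 ^ ℓ := Nat.pow_le_pow_right (by norm_num) hℓ
      have h3 : ℓ + 1 ≤ 2 ^ ℓ := Nat.lt_two_pow_self (n := ℓ)
      calc (M.powerset.filter (fun N => N.card ≤ j - s)).card * Nat.choose j (j - s)
          ≤ ((ℓ + 1) * (ℓ * r) ^ ℓ) * 2 ^ ℓ := Nat.mul_le_mul h1 h2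
        _ ≤ (2 ^ ℓ * (ℓ * r) ^ ℓ) * 2 ^ ℓ := Nat.mul_le_mul_right _ (Nat.mul_le_mul_right _ h3)
        _ = (4 * ℓ * r) ^ ℓ := by rw [← Nat.mul_pow, ← Nat.mul_pow]; ring_nf
        _ ≤ (4 * ℓ * r) ^ (2 * ℓ) := Nat.pow_le_pow_right (by nlinarith) (by omega)
  calc ∑ N ∈ M.powerset.filter (fun N => N.card ≤ j - s),
        ∑ p ∈ P.filter (fun p => p.2 ∩ M = N), (d : ℝ) ^ (p.2 ∩ M).card
      ≤ ∑ _N ∈ M.powerset.filter (fun N => N.card ≤ j - s),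
          (Nat.choose j (j - s) : ℝ) * d₀ := Finset.sum_le_sum key
    _ = ((M.powerset.filter (fun N => N.card ≤ j - s)).card * Nat.choose j (j - s) : ℕ) * d₀ := by
        rw [Finset.sum_const, nsmul_eq_mul]; push_cast; ring
    _ ≤ ((4 * ℓ * r) ^ (2 * ℓ) : ℕ) * d₀ := by
        apply mul_le_mul_of_nonneg_right _ hd₀
        exact_mod_cast hcard

lemma aux_step {α : Type*} [DecidableEq α] [Fintype α]
    (r j s ℓ : ℕ) (hr : 1 ≤ r) (hj : 1 ≤ j) (hs : s ≤ j) (hℓ : j ≤ ℓ)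
    (d₀ d : ℝ) (hd₀ : 0 ≤ d₀) (hd : 1 ≤ d)
    (X : Finset (Finset α)) (hunif : ∀ x ∈ X, x.card = j)
    (hspread : IsSpread j d₀ (1 / d) X)
    (hs0 : s = 0 → d ^ j ≤ d₀)
    (M : Finset α) (hM : M.card ≤ ℓ * r) :
    ∑ p ∈ (X ×ˢ (Finset.univ : Finset (Finset α))).filter
          (fun p => p.2 ⊆ p.1 ∧ p.2.card = j - s),
      1 / (d : ℝ) ^ (p.2 ∪ M).card
    ≤ (((4 * ℓ * r) ^ (2 * ℓ) : ℕ) * d₀ / d ^ (j - s)) * (1 / d ^ M.card) := by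
  classical
  have hd0 : (0:ℝ) < d := lt_of_lt_of_le one_pos hd
  set P := (X ×ˢ (Finset.univ : Finset (Finset α))).filter
          (fun p => p.2 ⊆ p.1 ∧ p.2.card = j - s) with hP
  have hterm : ∀ p ∈ P, 1 / (d : ℝ) ^ (p.2 ∪ M).card
      = d ^ (p.2 ∩ M).card / d ^ ((j - s) + M.card) := by
    intro p hp
    rw [hP, Finset.mem_filter] at hp
    have hcards : (p.2 ∪ M).card + (p.2 ∩ M).card = (j - s) + M.card := by
      rw [Finset.card_union_add_card_inter, hp.2.2]
    rw [div_eq_div_iff (by positivity) (by positivity), one_mul, ← pow_add]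
    congr 1
    omega
  rw [Finset.sum_congr rfl hterm, ← Finset.sum_div]
  rw [div_le_iff₀ (by positivity : (0:ℝ) < d ^ ((j-s) + M.card))]
  calc ∑ p ∈ P, (d:ℝ) ^ (p.2 ∩ M).card
      ≤ ((4 * ℓ * r) ^ (2 * ℓ) : ℕ) * d₀ :=
        aux_core r j s ℓ hr hj hs hℓ d₀ d hd₀ hd X hunif hspread hs0 M hM
    _ = ((4 * ℓ * r) ^ (2 * ℓ) : ℕ) * d₀ / d ^ (j - s) * (1 / d ^ M.card) * d ^ ((j-s) + M.card) := by
        rw [pow_add]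
        field_simp

lemma aux_induct {α : Type*} [DecidableEq α] [Fintype α]
    (r j s ℓ : ℕ) (hr : 1 ≤ r) (hj : 1 ≤ j) (hs : s ≤ j) (hℓ : j ≤ ℓ)
    (d₀ d : ℝ) (hd₀ : 0 ≤ d₀) (hd : 1 ≤ d)
    (X : Finset (Finset α)) (hunif : ∀ x ∈ X, x.card = j)
    (hspread : IsSpread j d₀ (1 / d) X)
    (hs0 : s = 0 → d ^ j ≤ d₀) :
    ∀ k, k ≤ r →
    ∑ g ∈ Fintype.piFinset (fun _ : Fin k =>
        (X ×ˢ (Finset.univ : Finset (Finset α))).filter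
          (fun p => p.2 ⊆ p.1 ∧ p.2.card = j - s)),
      1 / d ^ (Finset.univ.biUnion (fun i : Fin k => (g i).2)).card
    ≤ ((((4 * ℓ * r) ^ (2 * ℓ) : ℕ) : ℝ) * d₀ / d ^ (j - s)) ^ k := by
  classical
  have hd0 : (0:ℝ) < d := lt_of_lt_of_le one_pos hd
  set P := (X ×ˢ (Finset.univ : Finset (Finset α))).filter
          (fun p => p.2 ⊆ p.1 ∧ p.2.card = j - s) with hP
  set B : ℝ := (((4 * ℓ * r) ^ (2 * ℓ) : ℕ) : ℝ) * d₀ / d ^ (j - s) with hB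
  have hB0 : 0 ≤ B := by positivity
  intro k
  induction k with
  | zero =>
    intro _
    have hcard : (Fintype.piFinset (fun _ : Fin 0 => P)).card = 1 := by
      simp [Fintype.card_piFinset]
    simp only [Finset.univ_eq_empty, Finset.biUnion_empty, Finset.card_empty,
      pow_zero, div_one]
    rw [Finset.sum_const, hcard]
    norm_num
  | succ k ih =>
    intro hk1
    have ihk := ih (by omega)
    have hsplit : ∑ g ∈ Fintype.piFinset (fun _ : Fin (k+1) => P),
        1 / d ^ (Finset.univ.biUnion (fun i : Fin (k+1) => (g i).2)).card
        = ∑ p ∈ P, ∑ g ∈ Fintype.piFinset (fun _ : Fin k => P),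
            1 / d ^ (Finset.univ.biUnion (fun i : Fin (k+1) =>
              (Fin.cons (α := fun _ => Finset α × Finset α) p g i).2)).card := by
      rw [← Finset.sum_product']
      refine Finset.sum_nbij' (fun g => (g 0, Fin.tail g)) (fun q => Fin.cons q.1 q.2)
        ?_ ?_ ?_ ?_ ?_
      · intro g hg
        rw [Fintype.mem_piFinset] at hg
        exact Finset.mem_product.2 ⟨hg 0, Fintype.mem_piFinset.2 fun i => hg i.succ⟩
      · intro q hq
        rw [Finset.mem_product] at hq
        rw [Fintype.mem_piFinset]
        intro i
        refine Fin.cases ?_ ?_ i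
        · simpa using hq.1
        · intro i'; simpa using Fintype.mem_piFinset.1 hq.2 i'
      · intro g _; exact Fin.cons_self_tail g
      · intro q _; simp
      · intro g _; rw [Fin.cons_self_tail]
    have hbi : ∀ (p : Finset α × Finset α) (g : Fin k → Finset α × Finset α),
        (Finset.univ.biUnion (fun i : Fin (k+1) =>
          (Fin.cons (α := fun _ => Finset α × Finset α) p g i).2))
        = p.2 ∪ Finset.univ.biUnion (fun i : Fin k => (g i).2) := by
      intro p g
      ext a
      simp [Finset.mem_biUnion, Fin.exists_fin_succ]
    calc ∑ g ∈ Fintype.piFinset (fun _ : Fin (k+1) => P),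
          1 / d ^ (Finset.univ.biUnion (fun i : Fin (k+1) => (g i).2)).card
        = ∑ g ∈ Fintype.piFinset (fun _ : Fin k => P), ∑ p ∈ P,
            1 / d ^ (p.2 ∪ Finset.univ.biUnion (fun i : Fin k => (g i).2)).card := by
          rw [hsplit]
          rw [Finset.sum_comm]
          exact Finset.sum_congr rfl fun g _ => Finset.sum_congr rfl fun p _ => by
            rw [hbi]
      _ ≤ ∑ g ∈ Fintype.piFinset (fun _ : Fin k => P),
            B * (1 / d ^ (Finset.univ.biUnion (fun i : Fin k => (g i).2)).card) := by
          apply Finset.sum_le_sum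
          intro g hg
          apply aux_step r j s ℓ hr hj hs hℓ d₀ d hd₀ hd X hunif hspread hs0
          calc (Finset.univ.biUnion (fun i : Fin k => (g i).2)).card
              ≤ ∑ i : Fin k, (g i).2.card := Finset.card_biUnion_le
            _ = ∑ _i : Fin k, (j - s) := by
                apply Finset.sum_congr rfl
                intro i _
                have := Fintype.mem_piFinset.1 hg i
                rw [hP, Finset.mem_filter] at this
                exact this.2.2
            _ = k * (j - s) := by rw [Finset.sum_const, smul_eq_mul, Finset.card_univ,
                Fintype.card_fin]
            _ ≤ r * ℓ := Nat.mul_le_mul (by omega) (by omega)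
            _ = ℓ * r := Nat.mul_comm r ℓ
      _ = B * ∑ g ∈ Fintype.piFinset (fun _ : Fin k => P),
            1 / d ^ (Finset.univ.biUnion (fun i : Fin k => (g i).2)).card := by
          rw [Finset.mul_sum]
      _ ≤ B * B ^ k := mul_le_mul_of_nonneg_left ihk hB0
      _ = B ^ (k + 1) := (pow_succ' B k).symm


open Finset in
theorem stmt_18 {α : Type*} [DecidableEq α] [Fintype α]
    (r j s ℓ : ℕ) (hr : 1 ≤ r) (hj : 1 ≤ j) (hs : s ≤ j) (hℓ : j ≤ ℓ)
    (d₀ d : ℝ) (hd₀ : 0 ≤ d₀) (hd : 1 ≤ d)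
    (X : Finset (Finset α)) (hunif : ∀ x ∈ X, x.card = j)
    (hspread : IsSpread j d₀ (1 / d) X)
    (hs0 : s = 0 → d ^ j ≤ d₀) :
    ∑ g ∈ Fintype.piFinset (fun _ : Fin r =>
        (X ×ˢ (Finset.univ : Finset (Finset α))).filter
          (fun p => p.2 ⊆ p.1 ∧ p.2.card = j - s)),
      1 / d ^ (Finset.univ.biUnion (fun i : Fin r => (g i).2)).card
    ≤ (4 * ℓ * r : ℝ) ^ (2 * ℓ * r) * d₀ ^ r / d ^ (r * (j - s)) := by
  have h := aux_induct r j s ℓ hr hj hs hℓ d₀ d hd₀ hd X hunif hspread hs0 r le_rfl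
  refine h.trans (le_of_eq ?_)
  rw [div_pow, mul_pow]
  push_cast
  rw [← pow_mul, ← pow_mul, Nat.mul_comm (j - s) r]
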